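/- Let Θ, σ, ℰ, ρ : ℝ → ℝ satisfy the silent-universe ODE system ρ' = −ρΘ, Θ' = −Θ²/3 − ρ/2 − 6σ² + Λ, σ' = −(2/3)Θσ + σ² − ℰ, ℰ' = −ρσ/2 − 3ℰσ − ℰΘ, and define II = Θ²/3 − 3σ², III = Θ³/27 − Θσ² − 2σ³, |C|² = 48ℰ². Then the identity (∂_t + Θ)III − (∂_t + Θ)²II + Λ(∂_t + Θ)Θ − |C|²/8 + ρ²/6 − Λρ/6 − Λ²/3 = 0 holds. -/

import Mathlib

/-- Local verification of the Gauss–Bonnet–Chern relation for silent model universes: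
with `ρ' = −ρΘ`, `Θ' = −Θ²/3 − ρ/2 − 6σ² + Λ`, `σ' = −(2/3)Θσ + σ² − ℰ`,
`ℰ' = −ρσ/2 − 3ℰσ − ℰΘ`, and `II = Θ²/3 − 3σ²`, `III = Θ³/27 − Θσ² − 2σ³`,
`|C|² = 48ℰ²`, one has
`(∂_t + Θ)III − (∂_t + Θ)²II + Λ(∂_t + Θ)Θ − |C|²/8 + ρ²/6 − Λρ/6 − Λ²/3 = 0`. -/
theorem silent_universe_GBC_identity (Λ : ℝ) (ρ Θ σ ℰ : ℝ → ℝ)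
    (hρ : ∀ t, HasDerivAt ρ (-(ρ t * Θ t)) t)
    (hΘ : ∀ t, HasDerivAt Θ (-(Θ t ^ 2) / 3 - ρ t / 2 - 6 * σ t ^ 2 + Λ) t)
    (hσ : ∀ t, HasDerivAt σ (-(2 / 3) * Θ t * σ t + σ t ^ 2 - ℰ t) t)
    (hℰ : ∀ t, HasDerivAt ℰ (-(ρ t * σ t) / 2 - 3 * ℰ t * σ t - ℰ t * Θ t) t) :
    ∀ t,
      (deriv (fun s => Θ s ^ 3 / 27 - Θ s * σ s ^ 2 - 2 * σ s ^ 3) t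
          + Θ t * (Θ t ^ 3 / 27 - Θ t * σ t ^ 2 - 2 * σ t ^ 3))
      - (deriv (fun s =>
            deriv (fun r => Θ r ^ 2 / 3 - 3 * σ r ^ 2) s
              + Θ s * (Θ s ^ 2 / 3 - 3 * σ s ^ 2)) t
          + Θ t * (deriv (fun r => Θ r ^ 2 / 3 - 3 * σ r ^ 2) t
              + Θ t * (Θ t ^ 2 / 3 - 3 * σ t ^ 2)))
      + Λ * (deriv Θ t + Θ t ^ 2)
      - 48 * ℰ t ^ 2 / 8 + ρ t ^ 2 / 6 - Λ * ρ t / 6 - Λ ^ 2 / 3 = 0 := by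
  intro t
  -- derivative of II
  have hII : ∀ s, HasDerivAt (fun r => Θ r ^ 2 / 3 - 3 * σ r ^ 2)
      (2 * Θ s * (-(Θ s ^ 2) / 3 - ρ s / 2 - 6 * σ s ^ 2 + Λ) / 3
        - 3 * (2 * σ s * (-(2 / 3) * Θ s * σ s + σ s ^ 2 - ℰ s))) s := by
    intro s
    have h := (((hΘ s).pow 2).div_const 3).sub (((hσ s).pow 2).const_mul 3)
    refine h.congr_deriv ?_
    push_cast
    ring
  -- middle function rewritten explicitly
  have hfun : (fun s =>
      deriv (fun r => Θ r ^ 2 / 3 - 3 * σ r ^ 2) s + Θ s * (Θ s ^ 2 / 3 - 3 * σ s ^ 2))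
      = fun s => Θ s ^ 3 / 9 - Θ s * ρ s / 3 - 3 * Θ s * σ s ^ 2 + 2 * Λ / 3 * Θ s
          - 6 * σ s ^ 3 + 6 * (σ s * ℰ s) := by
    funext s
    rw [(hII s).deriv]
    ring
  -- derivative of the middle function
  have hmid : HasDerivAt (fun s =>
      deriv (fun r => Θ r ^ 2 / 3 - 3 * σ r ^ 2) s + Θ s * (Θ s ^ 2 / 3 - 3 * σ s ^ 2))
      ((3 * Θ t ^ 2 * (-(Θ t ^ 2) / 3 - ρ t / 2 - 6 * σ t ^ 2 + Λ)) / 9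
        - ((-(Θ t ^ 2) / 3 - ρ t / 2 - 6 * σ t ^ 2 + Λ) * ρ t + Θ t * (-(ρ t * Θ t))) / 3
        - 3 * ((-(Θ t ^ 2) / 3 - ρ t / 2 - 6 * σ t ^ 2 + Λ) * σ t ^ 2
            + Θ t * (2 * σ t * (-(2 / 3) * Θ t * σ t + σ t ^ 2 - ℰ t)))
        + 2 * Λ / 3 * (-(Θ t ^ 2) / 3 - ρ t / 2 - 6 * σ t ^ 2 + Λ)
        - 6 * (3 * σ t ^ 2 * (-(2 / 3) * Θ t * σ t + σ t ^ 2 - ℰ t))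
        + 6 * ((-(2 / 3) * Θ t * σ t + σ t ^ 2 - ℰ t) * ℰ t
            + σ t * (-(ρ t * σ t) / 2 - 3 * ℰ t * σ t - ℰ t * Θ t))) t := by
    rw [hfun]
    have h1 := ((hΘ t).pow 3).div_const 9
    have h2 := ((hΘ t).mul (hρ t)).div_const 3
    have h3 := ((hΘ t).mul ((hσ t).pow 2)).const_mul 3
    have h4 := (hΘ t).const_mul (2 * Λ / 3)
    have h5 := ((hσ t).pow 3).const_mul 6
    have h6 := ((hσ t).mul (hℰ t)).const_mul 6
    have h := ((((h1.sub h2).sub h3).add h4).sub h5).add h6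
    refine (h.congr_deriv ?_).congr_of_eventuallyEq (Filter.Eventually.of_forall fun s => ?_)
    · push_cast [Pi.pow_apply, Pi.mul_apply]; ring
    · simp only [Pi.add_apply, Pi.sub_apply, Pi.pow_apply, Pi.mul_apply]; ring
  -- derivative of III
  have hIII : HasDerivAt (fun s => Θ s ^ 3 / 27 - Θ s * σ s ^ 2 - 2 * σ s ^ 3)
      ((3 * Θ t ^ 2 * (-(Θ t ^ 2) / 3 - ρ t / 2 - 6 * σ t ^ 2 + Λ)) / 27
        - ((-(Θ t ^ 2) / 3 - ρ t / 2 - 6 * σ t ^ 2 + Λ) * σ t ^ 2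
            + Θ t * (2 * σ t * (-(2 / 3) * Θ t * σ t + σ t ^ 2 - ℰ t)))
        - 2 * (3 * σ t ^ 2 * (-(2 / 3) * Θ t * σ t + σ t ^ 2 - ℰ t))) t := by
    have h1 := ((hΘ t).pow 3).div_const 27
    have h2 := (hΘ t).mul ((hσ t).pow 2)
    have h3 := ((hσ t).pow 3).const_mul 2
    have h := (h1.sub h2).sub h3
    refine h.congr_deriv ?_
    push_cast [Pi.pow_apply, Pi.mul_apply]
    ring
  rw [hIII.deriv, hmid.deriv, (hII t).deriv, (hΘ t).deriv]
  ring
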